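/- Let G be a graph and let v_1, v_2, v_3, v_4, v_5 be five pairwise adjacent vertices of G (i.e., they induce a complete graph K_5 in G). Then the monomial v_1 v_2 v_3 v_4 v_5 belongs to I(G)^{(4)}. -/

import Mathlib

open MvPolynomial

/-- The edge ideal of a graph `G` on vertices `Fin n`, inside `K[x_1,…,x_n]`. -/
noncomputable def edgeIdeal (K : Type*) [Field K] {n : ℕ} (G : SimpleGraph (Fin n)) :
    Ideal (MvPolynomial (Fin n) K) :=
  Ideal.span {m | ∃ i j : Fin n, G.Adj i j ∧ m = X i * X j}

/-- `C` is a vertex cover of `G`. -/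
def IsVertexCover {n : ℕ} (G : SimpleGraph (Fin n)) (C : Set (Fin n)) : Prop :=
  ∀ ⦃i j : Fin n⦄, G.Adj i j → i ∈ C ∨ j ∈ C

/-- `C` is a minimal vertex cover of `G`. -/
def IsMinVertexCover {n : ℕ} (G : SimpleGraph (Fin n)) (C : Set (Fin n)) : Prop :=
  IsVertexCover G C ∧ ∀ C' ⊆ C, IsVertexCover G C' → C' = C

/-- The monomial prime ideal generated by the variables in `C`. -/
noncomputable def varIdeal (K : Type*) [Field K] {n : ℕ} (C : Set (Fin n)) :
    Ideal (MvPolynomial (Fin n) K) :=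
  Ideal.span (X '' C)

/-- The `s`-th symbolic power of the edge ideal of `G`:
the intersection of `p_C ^ s` over all minimal vertex covers `C` of `G`. -/
noncomputable def symbPower (K : Type*) [Field K] {n : ℕ} (G : SimpleGraph (Fin n)) (s : ℕ) :
    Ideal (MvPolynomial (Fin n) K) :=
  ⨅ (C : Set (Fin n)) (_ : IsMinVertexCover G C), varIdeal K C ^ s

/-- If `v_1, …, v_5` are five pairwise adjacent vertices of `G`
(inducing a `K_5`), then `v_1 v_2 v_3 v_4 v_5 ∈ I(G)^{(4)}`. -/
theorem stmt_11 (K : Type*) [Field K] {n : ℕ} (G : SimpleGraph (Fin n))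
    (v : Fin 5 → Fin n) (hadj : ∀ k l : Fin 5, k ≠ l → G.Adj (v k) (v l)) :
    (∏ k, X (v k)) ∈ symbPower K G 4 := by
  classical
  rw [symbPower]
  simp only [Ideal.mem_iInf]
  intro C hC
  set I : Ideal (MvPolynomial (Fin n) K) := varIdeal K C
  set T : Finset (Fin 5) := Finset.univ.filter (fun k => v k ∈ C) with hT
  have hcompl : Tᶜ.card ≤ 1 := by
    rw [Finset.card_le_one]
    intro a ha b hb
    simp only [hT, Finset.mem_compl, Finset.mem_filter, Finset.mem_univ, true_and] at ha hb
    by_contra hne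
    rcases hC.1 (hadj a b hne) with h | h
    · exact ha h
    · exact hb h
  have hcard : 4 ≤ T.card := by
    have := Finset.card_compl T
    simp only [Fintype.card_fin] at this
    omega
  have hprod : (∏ k ∈ T, X (v k)) ∈ I ^ T.card := by
    have : ∀ k ∈ T, (X (v k) : MvPolynomial (Fin n) K) ∈ I := by
      intro k hk
      simp only [hT, Finset.mem_filter] at hk
      exact Ideal.subset_span ⟨v k, hk.2, rfl⟩
    rw [← Finset.prod_const]
    exact Ideal.prod_mem_prod this
  have hmem : (∏ k ∈ T, X (v k)) ∈ I ^ 4 :=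
    Ideal.pow_le_pow_right hcard hprod
  have := Ideal.mul_mem_right (∏ k ∈ Tᶜ, X (v k)) _ hmem
  rwa [Finset.prod_mul_prod_compl] at this
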